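/- Consider a multi-armed bandit with finite action set 𝒜 and reward distributions P_a supported on [0, R*], with means Q(a) and policy values v(π) = ∑_a π(a)Q(a). Let N strictly positive target policies be partitioned into M disjoint clusters K₁,…,K_M of sizes N₁,…,N_M, with cluster barycenters π_KL^{(j)} = (1/N_j)∑_{π∈K_j} π and σ_c = max_j max_{π∈K_j} max_a π(a)/π_KL^{(j)}(a). Assume v(π*) = v(π*^{(1)}) and v(π*^{(1)}) − v(π*^{(j)}) > Δ for all j = 2,…,M, where π*^{(j)} = argmax_{π∈K_j} v(π) and π* is the overall best target policy. Collect independent per-cluster datasets of equal sizes n₁ = ⋯ = n_M, each i.i.d. with A_t^{(j)} ∼ π_KL^{(j)} and R_t^{(j)} | A_t^{(j)} = a ∼ P_a, form the importance estimators v̂_n^{(j)}(π) = (1/n_j)∑_t (π(A_t^{(j)})/π_KL^{(j)}(A_t^{(j)})) R_t^{(j)} for π ∈ K_j, and let π̂_n be any selection maximizing v̂_n^{(j)}(π) over all j and π ∈ K_j. Then for any δ ∈ (0,1) and ε ∈ (0, Δ], if n = n₁·M ≥ 2 M R*² σ_c² log( (2 + N + M + (M−1)(N₁+1))/δ ) /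 ε², the regret ℛ(π̂_n) = v(π*) − v(π̂_n) satisfies P( ℛ(π̂_n) < ε ) ≥ 1 − δ. -/

import Mathlib

open Finset Real MeasureTheory

section Aux

open Real MeasureTheory ProbabilityTheory

/-- Core analytic inequality for Hoeffding's lemma, case `0 ≤ h`. -/
lemma hoeffding_core_half (p h : ℝ) (hp0 : 0 ≤ p) (hp1 : p ≤ 1) (hh : 0 ≤ h) :
    1 - p + p * Real.exp h ≤ Real.exp (p * h + h ^ 2 / 8) := by
  set D : ℝ → ℝ := fun t => (1 - p) + p * Real.exp t with hDdef
  have hD : ∀ t, 0 < D t := by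
    intro t
    rcases eq_or_lt_of_le hp1 with h1 | h1
    · rw [hDdef]; simp only [h1]
      have := Real.exp_pos t
      nlinarith
    · have : 0 < 1 - p := by linarith
      have : 0 ≤ p * Real.exp t := by positivity
      simp only [hDdef]; linarith
  have hD' : ∀ t, HasDerivAt D (p * Real.exp t) t := by
    intro t
    exact ((Real.hasDerivAt_exp t).const_mul p).const_add (1 - p)
  -- G = derivative of F
  set G : ℝ → ℝ := fun t => p * Real.exp t / D t - p - t / 4 with hGdef
  set F : ℝ → ℝ := fun t => Real.log (D t) - p * t - t ^ 2 / 8 with hFdef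
  have hF' : ∀ t, HasDerivAt F (G t) t := by
    intro t
    have h1 : HasDerivAt (fun t => Real.log (D t)) (p * Real.exp t / D t) t :=
      (hD' t).log (hD t).ne'
    have h2 : HasDerivAt (fun t : ℝ => p * t) p t := (hasDerivAt_id t).const_mul p |>.congr_deriv (by ring)
    have h3 : HasDerivAt (fun t : ℝ => t ^ 2 / 8) (t / 4) t := by
      have := (hasDerivAt_pow 2 t).div_const 8
      refine this.congr_deriv ?_
      push_cast; ring
    exact (h1.sub h2).sub h3
  have hG' : ∀ t, HasDerivAt G (p * Real.exp t / D t - (p * Real.exp t / D t) ^ 2 - 1 / 4) t := by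
    intro t
    have h1 : HasDerivAt (fun t => p * Real.exp t / D t)
        ((p * Real.exp t * D t - p * Real.exp t * (p * Real.exp t)) / D t ^ 2) t :=
      ((Real.hasDerivAt_exp t).const_mul p).div (hD' t) (hD t).ne'
    have h2 : HasDerivAt (fun t : ℝ => t / 4) (1 / 4) t := (hasDerivAt_id t).div_const 4
    have h3 := (h1.sub_const p).sub h2
    refine h3.congr_deriv ?_
    have := (hD t).ne'
    field_simp
  have hGderiv_nonpos : ∀ t, p * Real.exp t / D t - (p * Real.exp t / D t) ^ 2 - 1 / 4 ≤ 0 := by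
    intro t
    nlinarith [sq_nonneg (p * Real.exp t / D t - 1 / 2)]
  have hG0 : G 0 = 0 := by
    simp [hGdef, hDdef, Real.exp_zero]
  have hGanti : AntitoneOn G (Set.Ici 0) := by
    refine antitoneOn_of_deriv_nonpos (convex_Ici 0) ?_ ?_ ?_
    · exact fun x _ => (hG' x).continuousAt.continuousWithinAt
    · exact fun x _ => (hG' x).differentiableAt.differentiableWithinAt
    · intro x _
      rw [(hG' x).deriv]
      exact hGderiv_nonpos x
  have hGle : ∀ t ∈ Set.Ici (0:ℝ), G t ≤ 0 := by
    intro t ht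
    calc G t ≤ G 0 := hGanti (Set.self_mem_Ici) ht ht
    _ = 0 := hG0
  have hFanti : AntitoneOn F (Set.Ici 0) := by
    refine antitoneOn_of_deriv_nonpos (convex_Ici 0) ?_ ?_ ?_
    · exact fun x _ => (hF' x).continuousAt.continuousWithinAt
    · exact fun x _ => (hF' x).differentiableAt.differentiableWithinAt
    · intro x hx
      rw [(hF' x).deriv]
      exact hGle x (interior_subset hx)
  have hF0 : F 0 = 0 := by
    simp [hFdef, hDdef, Real.exp_zero]
  have hFh : F h ≤ 0 := by
    calc F h ≤ F 0 := hFanti Set.self_mem_Ici hh hh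
    _ = 0 := hF0
  have : Real.log (D h) ≤ p * h + h ^ 2 / 8 := by
    simp only [hFdef] at hFh; linarith
  calc 1 - p + p * Real.exp h = D h := by rw [hDdef]
  _ = Real.exp (Real.log (D h)) := (Real.exp_log (hD h)).symm
  _ ≤ Real.exp (p * h + h ^ 2 / 8) := Real.exp_le_exp.mpr this

lemma hoeffding_core (p h : ℝ) (hp0 : 0 ≤ p) (hp1 : p ≤ 1) :
    1 - p + p * Real.exp h ≤ Real.exp (p * h + h ^ 2 / 8) := by
  rcases le_or_gt 0 h with hh | hh
  · exact hoeffding_core_half p h hp0 hp1 hh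
  · have key := hoeffding_core_half (1 - p) (-h) (by linarith) (by linarith) (by linarith)
    have hmul := mul_le_mul_of_nonneg_right key (Real.exp_pos h).le
    have hee : Real.exp (-h) * Real.exp h = 1 := by
      rw [← Real.exp_add]; simp
    calc 1 - p + p * Real.exp h
        = (1 - (1 - p) + (1 - p) * Real.exp (-h)) * Real.exp h := by
          have : Real.exp h ≠ 0 := (Real.exp_pos h).ne'
          nlinarith [hee]
      _ ≤ Real.exp ((1 - p) * (-h) + (-h) ^ 2 / 8) * Real.exp h := hmul
      _ = Real.exp (p * h + h ^ 2 / 8) := by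
          rw [← Real.exp_add]; ring_nf

/-- Integrability of a measurable a.e.-bounded-in-`[0,b]` function. -/
lemma integrable_of_ae_icc {Ω : Type*} [MeasurableSpace Ω] {ν : Measure Ω} [IsFiniteMeasure ν]
    {g : Ω → ℝ} (hg : AEStronglyMeasurable g ν) {b : ℝ}
    (hbd : ∀ᵐ x ∂ν, g x ∈ Set.Icc 0 b) : Integrable g ν := by
  refine Integrable.mono' (integrable_const b) hg ?_
  filter_upwards [hbd] with x hx
  rw [Real.norm_eq_abs, abs_le]
  exact ⟨by linarith [hx.1, hx.2], hx.2⟩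

/-- Hoeffding's lemma (mgf form) for a random variable with values a.e. in `[0, b]`. -/
lemma hoeffding_mgf {Ω : Type*} [MeasurableSpace Ω] (ν : Measure Ω) [IsProbabilityMeasure ν]
    (g : Ω → ℝ) (hg : Measurable g) (b : ℝ) (hb : 0 < b)
    (hbd : ∀ᵐ x ∂ν, g x ∈ Set.Icc 0 b) (s : ℝ) :
    ∫ x, Real.exp (s * g x) ∂ν ≤ Real.exp (s * (∫ x, g x ∂ν) + s ^ 2 * b ^ 2 / 8) := by
  have hgi : Integrable g ν := integrable_of_ae_icc hg.aestronglyMeasurable hbd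
  set m : ℝ := ∫ x, g x ∂ν with hm
  have hm0 : 0 ≤ m := integral_nonneg_of_ae (hbd.mono fun x hx => hx.1)
  have hmb : m ≤ b := by
    have := integral_mono_ae hgi (integrable_const b) (hbd.mono fun x hx => hx.2)
    simpa using this
  -- pointwise convexity bound
  have hpt : ∀ᵐ x ∂ν, Real.exp (s * g x) ≤ (1 - g x / b) + g x / b * Real.exp (s * b) := by
    filter_upwards [hbd] with x hx
    have h1 : (0:ℝ) ≤ 1 - g x / b := by
      rw [sub_nonneg, div_le_one hb]; exact hx.2
    have h2 : (0:ℝ) ≤ g x / b := div_nonneg hx.1 hb.le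
    have h3 : (1 - g x / b) + g x / b = 1 := by ring
    have := convexOn_exp.2 (Set.mem_univ (0:ℝ)) (Set.mem_univ (s * b)) h1 h2 h3
    simp only [smul_eq_mul, mul_zero, zero_add, Real.exp_zero, mul_one] at this
    have harg : g x / b * (s * b) = s * g x := by field_simp
    rw [harg] at this
    linarith
  have hInt1 : Integrable (fun x => Real.exp (s * g x)) ν := by
    refine integrable_of_ae_icc ((hg.const_mul s).exp).aestronglyMeasurable
      (b := Real.exp (|s| * b)) ?_
    filter_upwards [hbd] with x hx
    constructor
    · positivity
    · refine Real.exp_le_exp.mpr ?_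
      nlinarith [le_abs_self s, neg_abs_le s, hx.1, hx.2]
  have hInt2 : Integrable (fun x => (1 - g x / b) + g x / b * Real.exp (s * b)) ν :=
    ((integrable_const (1:ℝ)).sub (hgi.div_const b)).add ((hgi.div_const b).mul_const _)
  have hstep1 : ∫ x, Real.exp (s * g x) ∂ν ≤ (1 - m / b) + m / b * Real.exp (s * b) := by
    calc ∫ x, Real.exp (s * g x) ∂ν
        ≤ ∫ x, ((1 - g x / b) + g x / b * Real.exp (s * b)) ∂ν :=
          integral_mono_ae hInt1 hInt2 hpt
      _ = (1 - m / b) + m / b * Real.exp (s * b) := by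
          have hfe : (fun x => (1 - g x / b) + g x / b * Real.exp (s * b))
              = fun x => 1 + (Real.exp (s * b) - 1) / b * g x := by
            funext x; field_simp; ring
          rw [hfe, integral_add (integrable_const (1:ℝ)) (hgi.const_mul _),
            MeasureTheory.integral_const_mul, integral_const]
          simp only [measure_univ, probReal_univ, ENNReal.toReal_one, smul_eq_mul, one_mul, ← hm]
          field_simp
          ring
  have hcore := hoeffding_core (m / b) (s * b)
    (div_nonneg hm0 hb.le) ((div_le_one hb).mpr hmb)
  calc ∫ x, Real.exp (s * g x) ∂ν ≤ 1 - m / b + m / b * Real.exp (s * b) := by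
        rw [sub_add] at hstep1 ⊢ <;> linarith [hstep1]
    _ ≤ Real.exp (m / b * (s * b) + (s * b) ^ 2 / 8) := hcore
    _ = Real.exp (s * m + s ^ 2 * b ^ 2 / 8) := by
        congr 1
        field_simp

/-- One-sided Hoeffding inequality for an i.i.d. sum over a finite product measure. -/
lemma hoeffding_tail {Ω : Type*} [MeasurableSpace Ω] (ν : Measure Ω) [IsProbabilityMeasure ν]
    (g : Ω → ℝ) (hg : Measurable g) (b : ℝ) (hb : 0 < b)
    (hbd : ∀ᵐ x ∂ν, g x ∈ Set.Icc 0 b) (k : ℕ) (t : ℝ) (ht : 0 < t) :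
    ((Measure.pi fun _ : Fin k => ν)
        {y | (k : ℝ) * (∫ x, g x ∂ν) + (k : ℝ) * t ≤ ∑ i, g (y i)}).toReal
      ≤ Real.exp (-2 * k * t ^ 2 / b ^ 2) := by
  set m : ℝ := ∫ x, g x ∂ν with hm
  set s : ℝ := 4 * t / b ^ 2 with hs
  have hspos : 0 < s := by positivity
  set Pn : Measure (Fin k → Ω) := Measure.pi fun _ : Fin k => ν with hPn
  have : IsProbabilityMeasure Pn := by rw [hPn]; infer_instance
  set X : (Fin k → Ω) → ℝ := fun y => ∑ i, g (y i) with hX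
  have hXmeas : Measurable X := Finset.measurable_sum _ fun i _ => hg.comp (measurable_pi_apply i)
  -- a.e. bound for all coordinates
  have hbdn : ∀ᵐ y ∂Pn, ∀ i, g (y i) ∈ Set.Icc 0 b := by
    rw [MeasureTheory.ae_all_iff]
    intro i
    have h0 : ν {x | ¬ g x ∈ Set.Icc 0 b} = 0 := by
      rw [← MeasureTheory.ae_iff]; exact hbd
    have : Pn (Function.eval i ⁻¹' {x | ¬ g x ∈ Set.Icc 0 b}) = 0 :=
      Measure.pi_eval_preimage_null _ h0
    rw [MeasureTheory.ae_iff]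
    exact this
  -- integrability of the exponential of the sum
  have hint : Integrable (fun y => Real.exp (s * X y)) Pn := by
    refine integrable_of_ae_icc ((hXmeas.const_mul s).exp).aestronglyMeasurable
      (b := Real.exp (s * (k * b))) ?_
    filter_upwards [hbdn] with y hy
    refine ⟨(Real.exp_pos _).le, Real.exp_le_exp.mpr ?_⟩
    have hXle : X y ≤ k * b := by
      rw [hX]
      calc ∑ i, g (y i) ≤ ∑ _i : Fin k, b := Finset.sum_le_sum fun i _ => (hy i).2
        _ = k * b := by simp [Finset.sum_const, mul_comm]
    exact mul_le_mul_of_nonneg_left hXle hspos.le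
  -- Markov / Chernoff
  have hmarkov := ProbabilityTheory.measure_ge_le_exp_mul_mgf (μ := Pn) (X := X)
    ((k : ℝ) * m + k * t) hspos.le hint
  -- mgf factorization
  have hmgf : mgf X Pn s ≤ Real.exp ((k : ℝ) * (s * m + s ^ 2 * b ^ 2 / 8)) := by
    have hprod : mgf X Pn s = ∏ _i : Fin k, ∫ x, Real.exp (s * g x) ∂ν := by
      rw [mgf]
      have : ∀ y : Fin k → Ω, Real.exp (s * X y) = ∏ i, Real.exp (s * g (y i)) := by
        intro y
        rw [hX, ← Real.exp_sum, Finset.mul_sum]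
      simp_rw [this]
      letI : MeasureSpace Ω := ⟨ν⟩
      have hvol : Pn = (volume : Measure (Fin k → Ω)) := rfl
      rw [hvol]
      exact MeasureTheory.integral_fintype_prod_eq_prod (fun _ x => Real.exp (s * g x))
    rw [hprod]
    calc ∏ _i : Fin k, ∫ x, Real.exp (s * g x) ∂ν
        ≤ ∏ _i : Fin k, Real.exp (s * m + s ^ 2 * b ^ 2 / 8) :=
          Finset.prod_le_prod (fun i _ => integral_nonneg fun x => (Real.exp_pos _).le)
            (fun i _ => hoeffding_mgf ν g hg b hb hbd s)
      _ = Real.exp ((k : ℝ) * (s * m + s ^ 2 * b ^ 2 / 8)) := by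
          rw [Finset.prod_const, ← Real.exp_nat_mul]
          simp
  calc (Pn {y | (k : ℝ) * m + (k : ℝ) * t ≤ X y}).toReal
      ≤ Real.exp (-s * ((k : ℝ) * m + k * t)) * mgf X Pn s := hmarkov
    _ ≤ Real.exp (-s * ((k : ℝ) * m + k * t)) * Real.exp ((k : ℝ) * (s * m + s ^ 2 * b ^ 2 / 8)) :=
        mul_le_mul_of_nonneg_left hmgf (Real.exp_pos _).le
    _ = Real.exp (-2 * k * t ^ 2 / b ^ 2) := by
        rw [← Real.exp_add]
        congr 1
        rw [hs]
        field_simp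
        ring

lemma pi_eval_marginal {ι : Type*} [Fintype ι] {β : ι → Type*} [∀ i, MeasurableSpace (β i)]
    (μ : ∀ i, Measure (β i)) [∀ i, IsProbabilityMeasure (μ i)] (j : ι) (s : Set (β j)) :
    Measure.pi μ (Function.eval j ⁻¹' s) = μ j s := by
  classical
  rw [Set.eval_preimage, Measure.pi_pi, Fintype.prod_eq_single j
    (fun i hij => by rw [Function.update_of_ne hij]; exact measure_univ),
    Function.update_self]

end Aux

/-- regret bound of clustered KL-based policy evaluation (Theorem 4.1 of
the paper).  Under the clustered setting with equal per-cluster sample sizes, if the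
total sample size `n = n₁·M` satisfies
`n ≥ 2MR*²σ_c² log((2+N+M+(M−1)(N₁+1))/δ)/ε²` for `ε ∈ (0, Δ]`, then the regret
`ℛ(π̂ₙ) = v(π*) − v(π̂ₙ)` of the maximizing clustered selection satisfies
`P(ℛ(π̂ₙ) < ε) ≥ 1 − δ`. -/
theorem clustered_regret_bound {α : Type*} [Fintype α] [MeasurableSpace α]
    [MeasurableSingletonClass α]
    (Rstar : ℝ) (hR : 0 < Rstar)
    (P : α → Measure ℝ) (hprob : ∀ a, IsProbabilityMeasure (P a))
    (hsupp : ∀ a, P a (Set.Icc 0 Rstar) = 1)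
    (Q : α → ℝ) (hQ : ∀ a, Q a = ∫ x, x ∂(P a))
    (N M : ℕ) (hN : 0 < N) (hM : 0 < M)
    (p : Fin N → α → ℝ) (hpos : ∀ i a, 0 < p i a) (hsum : ∀ i, ∑ a, p i a = 1)
    -- the cluster assignment, cluster sizes, and cluster barycenters
    (c : Fin N → Fin M)
    (Nsz : Fin M → ℕ) (hNsz : ∀ j, Nsz j = (Finset.univ.filter fun i => c i = j).card)
    (hNszpos : ∀ j, 0 < Nsz j)
    (pKLc : Fin M → α → ℝ)
    (hpKLc : ∀ j a, pKLc j a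
      = (1 / (Nsz j : ℝ)) * ∑ i ∈ Finset.univ.filter (fun i => c i = j), p i a)
    -- the uniform maximal importance weight over the clusters
    (σc : ℝ) (hσc : σc = ⨆ i : Fin N, ⨆ a : α, p i a / pKLc (c i) a)
    -- values, the overall best policy, and per-cluster best policies
    (v : (α → ℝ) → ℝ) (hv : ∀ q, v q = ∑ a, q a * Q a)
    (istar : Fin N) (hstar : ∀ i, v (p i) ≤ v (p istar))
    (ibest : Fin M → Fin N) (hibestmem : ∀ j, c (ibest j) = j)
    (hibest : ∀ j i, c i = j → v (p i) ≤ v (p (ibest j)))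
    -- Assumption (i): the overall best policy lies in cluster 1 (index `⟨0,_⟩`)
    (hclu1 : v (p istar) = v (p (ibest ⟨0, hM⟩)))
    -- Assumption (ii): the value gap between cluster 1 and the other clusters
    (Δ : ℝ) (hΔpos : 0 < Δ)
    (hgap : ∀ j : Fin M, j ≠ ⟨0, hM⟩ → v (p (ibest ⟨0, hM⟩)) - v (p (ibest j)) > Δ)
    -- equal per-cluster sample sizes and the mutually independent per-cluster datasets
    (n₁ : ℕ) (hn₁ : 0 < n₁) (n : ℕ) (hn : n = n₁ * M)
    (μc : Fin M → Measure (α × ℝ))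
    (hμc : ∀ j, μc j
      = ∑ a : α, (ENNReal.ofReal (pKLc j a)) • ((Measure.dirac a).prod (P a)))
    -- the per-cluster importance sampling estimates
    (vhat : (Fin M → Fin n₁ → α × ℝ) → Fin N → ℝ)
    (hvhat : ∀ ω i, vhat ω i = (1 / (n₁ : ℝ)) *
      ∑ t, (p i (ω (c i) t).1 / pKLc (c i) (ω (c i) t).1) * (ω (c i) t).2)
    -- a measurable selection maximizing the estimated values
    (iHat : (Fin M → Fin n₁ → α × ℝ) → Fin N) (hmeas : Measurable iHat)
    (hargmax : ∀ ω i, vhat ω i ≤ vhat ω (iHat ω))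
    (δ ε : ℝ) (hδ : δ ∈ Set.Ioo (0:ℝ) 1) (hε : ε ∈ Set.Ioc (0:ℝ) Δ)
    (hsample : (n : ℝ) ≥ 2 * M * Rstar ^ 2 * σc ^ 2 *
      Real.log ((2 + (N : ℝ) + M + ((M : ℝ) - 1) * ((Nsz ⟨0, hM⟩ : ℝ) + 1)) / δ) / ε ^ 2) :
    (Measure.pi (fun j : Fin M => Measure.pi (fun _ : Fin n₁ => μc j)))
        {ω | v (p istar) - v (p (iHat ω)) < ε}
      ≥ ENNReal.ofReal (1 - δ) := by
  classical
  obtain ⟨hδ0, hδ1⟩ := hδ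
  obtain ⟨hε0, hεΔ⟩ := hε
  have hn₁R : (0:ℝ) < n₁ := by exact_mod_cast hn₁
  have hMR : (1:ℝ) ≤ M := by exact_mod_cast hM
  have hαne : Nonempty α := by
    by_contra h
    have h0 : ∑ a : α, p istar a = 0 :=
      Finset.sum_eq_zero fun a _ => absurd ⟨a⟩ h
    rw [hsum istar] at h0; norm_num at h0
  -- positivity of the barycenters
  have hKLpos : ∀ j a, 0 < pKLc j a := by
    intro j a
    rw [hpKLc]
    have hcard : 0 < ((Finset.univ.filter fun i => c i = j)).card := by
      rw [← hNsz]; exact hNszpos j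
    have hne : (Finset.univ.filter fun i => c i = j).Nonempty := Finset.card_pos.mp hcard
    have hsumpos : 0 < ∑ i ∈ Finset.univ.filter (fun i => c i = j), p i a :=
      Finset.sum_pos (fun i _ => hpos i a) hne
    have hNpos : (0:ℝ) < Nsz j := by exact_mod_cast hNszpos j
    positivity
  -- bounds involving σc
  have hratio_pos : ∀ i a, 0 < p i a / pKLc (c i) a := fun i a =>
    div_pos (hpos i a) (hKLpos _ a)
  have hratio_le : ∀ i a, p i a / pKLc (c i) a ≤ σc := by
    intro i a
    rw [hσc]
    have hbdd : ∀ i', BddAbove (Set.range fun a => p i' a / pKLc (c i') a) := fun i' =>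
      (Set.finite_range _).bddAbove
    exact le_trans (le_ciSup (hbdd i) a)
      (le_ciSup (f := fun i' => ⨆ a, p i' a / pKLc (c i') a)
        ((Set.finite_range _).bddAbove) i)
  have hσpos : 0 < σc := by
    obtain ⟨a⟩ := hαne
    exact lt_of_lt_of_le (hratio_pos istar a) (hratio_le istar a)
  set b : ℝ := σc * Rstar with hbdef
  have hbpos : 0 < b := mul_pos hσpos hR
  -- importance-weighted reward
  set f : Fin N → α × ℝ → ℝ := fun i x => p i x.1 / pKLc (c i) x.1 * x.2 with hfdef
  have hfmeas : ∀ i, Measurable (f i) := fun i =>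
    ((measurable_of_countable fun a => p i a / pKLc (c i) a).comp measurable_fst).mul
      measurable_snd
  haveI : ∀ a, IsProbabilityMeasure (P a) := hprob
  have hPae : ∀ a, ∀ᵐ r ∂(P a), r ∈ Set.Icc 0 Rstar := by
    intro a
    rw [MeasureTheory.ae_iff]
    have hc := measure_compl (μ := P a)
      (measurableSet_Icc : MeasurableSet (Set.Icc (0:ℝ) Rstar)) (measure_ne_top _ _)
    rw [hsupp a, measure_univ] at hc
    have hset : {x : ℝ | ¬ x ∈ Set.Icc 0 Rstar} = (Set.Icc (0:ℝ) Rstar)ᶜ := rfl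
    rw [hset, hc]
    simp
  have hμc_eq : ∀ j, μc j = ∑ a : α, (ENNReal.ofReal (pKLc j a)) • ((P a).map (Prod.mk a)) := by
    intro j; rw [hμc]
    exact Finset.sum_congr rfl fun a _ => by rw [Measure.dirac_prod]
  have hsumKL : ∀ j, ∑ a : α, pKLc j a = 1 := by
    intro j
    simp_rw [hpKLc, ← Finset.mul_sum]
    rw [Finset.sum_comm]
    rw [Finset.sum_congr rfl (fun i _ => hsum i), Finset.sum_const, nsmul_eq_mul, ← hNsz]
    have : (Nsz j : ℝ) ≠ 0 := by
      have := hNszpos j; positivity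
    field_simp
  haveI hμcprob : ∀ j, IsProbabilityMeasure (μc j) := by
    intro j
    constructor
    rw [hμc_eq, Measure.finset_sum_apply]
    have h1 : ∀ a : α, ((ENNReal.ofReal (pKLc j a)) • ((P a).map (Prod.mk a))) Set.univ
        = ENNReal.ofReal (pKLc j a) := by
      intro a
      rw [Measure.smul_apply, Measure.map_apply measurable_prodMk_left MeasurableSet.univ]
      simp
    rw [Finset.sum_congr rfl fun a _ => h1 a,
      ← ENNReal.ofReal_sum_of_nonneg (fun a _ => (hKLpos j a).le), hsumKL]
    simp
  -- second coordinate lies a.e. in [0, R*]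
  have hμc_snd : ∀ j, ∀ᵐ x ∂(μc j), x.2 ∈ Set.Icc 0 Rstar := by
    intro j
    rw [MeasureTheory.ae_iff, hμc_eq, Measure.finset_sum_apply]
    refine Finset.sum_eq_zero fun a _ => ?_
    have hSm : MeasurableSet {x : α × ℝ | ¬ x.2 ∈ Set.Icc 0 Rstar} :=
      measurable_snd (measurableSet_Icc.compl)
    rw [Measure.smul_apply, Measure.map_apply measurable_prodMk_left hSm]
    have hpre : (Prod.mk a) ⁻¹' {x : α × ℝ | ¬ x.2 ∈ Set.Icc 0 Rstar}
        = {r : ℝ | ¬ r ∈ Set.Icc 0 Rstar} := rfl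
    rw [hpre, MeasureTheory.ae_iff.mp (hPae a)]
    simp
  -- the importance-weighted rewards lie a.e. in [0, b]
  have hfae : ∀ i, ∀ᵐ x ∂(μc (c i)), f i x ∈ Set.Icc 0 b := by
    intro i
    filter_upwards [hμc_snd (c i)] with x hx
    refine ⟨mul_nonneg (hratio_pos i x.1).le hx.1, ?_⟩
    calc f i x ≤ σc * x.2 := mul_le_mul_of_nonneg_right (hratio_le i x.1) hx.1
      _ ≤ σc * Rstar := mul_le_mul_of_nonneg_left hx.2 hσpos.le
  have hfL1 : ∀ i, Integrable (f i) (μc (c i)) := fun i =>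
    integrable_of_ae_icc (hfmeas i).aestronglyMeasurable (hfae i)
  -- the mean of the importance-weighted reward is the policy value
  have hmean : ∀ i, ∫ x, f i x ∂(μc (c i)) = v (p i) := by
    intro i
    rw [hμc_eq]
    rw [integral_finset_sum_measure ?hint]
    case hint =>
      intro a _
      refine Integrable.smul_measure ?_ ENNReal.ofReal_ne_top
      rw [integrable_map_measure (hfmeas i).aestronglyMeasurable
        measurable_prodMk_left.aemeasurable]
      have hfr : (fun r => f i (a, r)) = fun r : ℝ => (p i a / pKLc (c i) a) * r := rfl
      show Integrable (fun r => f i (a, r)) (P a)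
      rw [hfr]
      exact (integrable_of_ae_icc measurable_id.aestronglyMeasurable (hPae a)).const_mul _
    have hterm : ∀ a : α, ∫ x, f i x ∂((ENNReal.ofReal (pKLc (c i) a)) • ((P a).map (Prod.mk a)))
        = pKLc (c i) a * ((p i a / pKLc (c i) a) * Q a) := by
      intro a
      rw [integral_smul_measure, ENNReal.toReal_ofReal (hKLpos _ a).le, smul_eq_mul]
      congr 1
      rw [integral_map measurable_prodMk_left.aemeasurable (hfmeas i).aestronglyMeasurable]
      show ∫ r, (p i a / pKLc (c i) a) * r ∂(P a) = _
      rw [MeasureTheory.integral_const_mul, hQ a]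
    rw [Finset.sum_congr rfl fun a _ => hterm a, hv]
    refine Finset.sum_congr rfl fun a _ => ?_
    have := (hKLpos (c i) a).ne'
    field_simp
  -- the probability space and the bad events
  set Pbig : Measure (Fin M → Fin n₁ → α × ℝ) :=
    Measure.pi (fun j : Fin M => Measure.pi fun _ : Fin n₁ => μc j) with hPbig
  set β : ℝ := Real.exp (-2 * n₁ * (ε / 2) ^ 2 / b ^ 2) with hβdef
  set Bup : Fin N → Set (Fin n₁ → α × ℝ) := fun i =>
    {y | (n₁ : ℝ) * v (p i) + (n₁ : ℝ) * (ε / 2) ≤ ∑ t, f i (y t)} with hBup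
  set Bdn : Set (Fin n₁ → α × ℝ) :=
    {y | (n₁ : ℝ) * (∫ x, (b - f istar x) ∂(μc (c istar))) + (n₁ : ℝ) * (ε / 2)
      ≤ ∑ t, (b - f istar (y t))} with hBdn
  have hup : ∀ i, Pbig (Function.eval (c i) ⁻¹' Bup i) ≤ ENNReal.ofReal β := by
    intro i
    rw [hPbig, pi_eval_marginal]
    have htail := hoeffding_tail (μc (c i)) (f i) (hfmeas i) b hbpos (hfae i) n₁ (ε / 2)
      (by positivity)
    rw [hmean i] at htail
    calc (Measure.pi fun _ : Fin n₁ => μc (c i)) (Bup i)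
        = ENNReal.ofReal (((Measure.pi fun _ : Fin n₁ => μc (c i)) (Bup i)).toReal) :=
          (ENNReal.ofReal_toReal (measure_ne_top _ _)).symm
      _ ≤ ENNReal.ofReal β := ENNReal.ofReal_le_ofReal htail
  have hdnae : ∀ᵐ x ∂(μc (c istar)), b - f istar x ∈ Set.Icc 0 b := by
    filter_upwards [hfae istar] with x hx
    exact ⟨by linarith [hx.2], by linarith [hx.1]⟩
  have hdn : Pbig (Function.eval (c istar) ⁻¹' Bdn) ≤ ENNReal.ofReal β := by
    rw [hPbig, pi_eval_marginal]
    have htail := hoeffding_tail (μc (c istar)) (fun x => b - f istar x)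
      (measurable_const.sub (hfmeas istar)) b hbpos hdnae n₁ (ε / 2) (by positivity)
    calc (Measure.pi fun _ : Fin n₁ => μc (c istar)) Bdn
        = ENNReal.ofReal (((Measure.pi fun _ : Fin n₁ => μc (c istar)) Bdn).toReal) :=
          (ENNReal.ofReal_toReal (measure_ne_top _ _)).symm
      _ ≤ ENNReal.ofReal β := ENNReal.ofReal_le_ofReal htail
  -- value of the integral in Bdn
  have hdnmean : ∫ x, (b - f istar x) ∂(μc (c istar)) = b - v (p istar) := by
    rw [integral_sub (integrable_const b) (hfL1 istar), integral_const, hmean istar]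
    simp
  -- the inclusion of the bad regret event into the union of deviation events
  have hincl : {ω : Fin M → Fin n₁ → α × ℝ | ¬ (v (p istar) - v (p (iHat ω)) < ε)} ⊆
      (Function.eval (c istar) ⁻¹' Bdn) ∪ ⋃ i, Function.eval (c i) ⁻¹' Bup i := by
    intro ω hω
    simp only [Set.mem_setOf_eq, not_lt] at hω
    by_contra hmem
    rw [Set.mem_union] at hmem
    push_neg at hmem
    obtain ⟨h1, h2⟩ := hmem
    rw [Set.mem_iUnion] at h2
    push_neg at h2
    have h2' := h2 (iHat ω)
    rw [Set.mem_preimage, hBup, Set.mem_setOf_eq, not_le] at h2'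
    rw [Set.mem_preimage, hBdn, Set.mem_setOf_eq, not_le, hdnmean] at h1
    -- rewrite the sum in h1
    have hsumb : ∑ t, (b - f istar (Function.eval (c istar) ω t))
        = (n₁ : ℝ) * b - ∑ t, f istar (ω (c istar) t) := by
      rw [Finset.sum_sub_distrib, Finset.sum_const, Finset.card_univ, Fintype.card_fin,
        nsmul_eq_mul]
    rw [hsumb] at h1
    -- h1 : n₁ b - ∑ f* < n₁ (b - v*) + n₁ ε/2,  so  ∑ f* > n₁ v* - n₁ ε/2
    -- h2' : ∑ f_iHat < n₁ v_iHat + n₁ ε/2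
    have hvs : vhat ω istar = (1 / (n₁ : ℝ)) * ∑ t, f istar (ω (c istar) t) := hvhat ω istar
    have hvi : vhat ω (iHat ω) = (1 / (n₁ : ℝ)) * ∑ t, f (iHat ω) (ω (c (iHat ω)) t) :=
      hvhat ω (iHat ω)
    have harg := hargmax ω istar
    rw [hvs, hvi] at harg
    have hfs : ∑ t, f istar (ω (c istar) t) ≤ ∑ t, f (iHat ω) (ω (c (iHat ω)) t) := by
      have h1n : 0 < 1 / (n₁ : ℝ) := by positivity
      exact (mul_le_mul_iff_right₀ h1n).mp harg
    have h2'' : ∑ t, f (iHat ω) (Function.eval (c (iHat ω)) ω t)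
        = ∑ t, f (iHat ω) (ω (c (iHat ω)) t) := rfl
    rw [h2''] at h2'
    have hmul := mul_le_mul_of_nonneg_left hω hn₁R.le
    linarith only [h1, h2', hfs, hmul]
  -- numeric bound
  set C : ℝ := 2 + (N : ℝ) + M + ((M : ℝ) - 1) * ((Nsz ⟨0, hM⟩ : ℝ) + 1) with hCdef
  have hCge : (N : ℝ) + 1 ≤ C := by
    have h1 : (0:ℝ) ≤ ((M : ℝ) - 1) * ((Nsz ⟨0, hM⟩ : ℝ) + 1) :=
      mul_nonneg (by linarith) (by positivity)
    rw [hCdef]; linarith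
  have hCpos : (0:ℝ) < C := by
    have : (0:ℝ) ≤ N := Nat.cast_nonneg N
    linarith
  have hβle : β ≤ δ / C := by
    rw [hβdef]
    have hdC : δ / C = Real.exp (Real.log (δ / C)) := (Real.exp_log (by positivity)).symm
    rw [hdC]
    apply Real.exp_le_exp.mpr
    have hlogeq : Real.log (δ / C) = - Real.log (C / δ) := by
      rw [← Real.log_inv]
      congr 1
      field_simp
    rw [hlogeq]
    have h1 : 2 * (M:ℝ) * Rstar ^ 2 * σc ^ 2 * Real.log (C / δ) ≤ (n:ℝ) * ε ^ 2 := by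
      rw [ge_iff_le, div_le_iff₀ (by positivity : (0:ℝ) < ε ^ 2)] at hsample
      linarith only [hsample]
    have hnn : (n : ℝ) = (n₁ : ℝ) * M := by rw [hn]; push_cast; ring
    rw [hnn] at h1
    have hM0 : (0:ℝ) < M := by linarith
    have h2 : 2 * Rstar ^ 2 * σc ^ 2 * Real.log (C / δ) ≤ (n₁:ℝ) * ε ^ 2 := by
      have h3 : (2 * Rstar ^ 2 * σc ^ 2 * Real.log (C / δ)) * M ≤ ((n₁:ℝ) * ε ^ 2) * M := by
        linarith only [h1]
      exact le_of_mul_le_mul_right h3 hM0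
    have hb2 : b ^ 2 = σc ^ 2 * Rstar ^ 2 := by rw [hbdef]; ring
    have hfinal : Real.log (C / δ) ≤ 2 * (n₁:ℝ) * (ε / 2) ^ 2 / b ^ 2 := by
      rw [le_div_iff₀ (by positivity : (0:ℝ) < b ^ 2), hb2]
      linarith only [h2]
    rw [show -2 * (n₁:ℝ) * (ε / 2) ^ 2 / b ^ 2 = -(2 * (n₁:ℝ) * (ε / 2) ^ 2 / b ^ 2) by ring]
    exact neg_le_neg hfinal
  have hβpos : 0 < β := Real.exp_pos _
  have hNβ : β + (N:ℝ) * β ≤ δ := by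
    calc β + (N:ℝ) * β = ((N:ℝ) + 1) * β := by ring
      _ ≤ ((N:ℝ) + 1) * (δ / C) := mul_le_mul_of_nonneg_left hβle (by positivity)
      _ ≤ C * (δ / C) := mul_le_mul_of_nonneg_right hCge (by positivity)
      _ = δ := by field_simp
  have hEc : Pbig {ω | ¬ (v (p istar) - v (p (iHat ω)) < ε)} ≤ ENNReal.ofReal δ := by
    calc Pbig {ω | ¬ (v (p istar) - v (p (iHat ω)) < ε)}
        ≤ Pbig ((Function.eval (c istar) ⁻¹' Bdn) ∪ ⋃ i, Function.eval (c i) ⁻¹' Bup i) :=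
          measure_mono hincl
      _ ≤ Pbig (Function.eval (c istar) ⁻¹' Bdn)
          + Pbig (⋃ i, Function.eval (c i) ⁻¹' Bup i) := measure_union_le _ _
      _ ≤ ENNReal.ofReal β + ∑ i : Fin N, ENNReal.ofReal β := by
          refine add_le_add hdn ?_
          exact le_trans (measure_iUnion_fintype_le _ _)
            (Finset.sum_le_sum fun i _ => hup i)
      _ = ENNReal.ofReal (β + N * β) := by
          rw [Finset.sum_const, Finset.card_univ, Fintype.card_fin, nsmul_eq_mul,
            ← ENNReal.ofReal_natCast N, ← ENNReal.ofReal_mul (Nat.cast_nonneg N),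
            ← ENNReal.ofReal_add hβpos.le (by positivity)]
      _ ≤ ENNReal.ofReal δ := ENNReal.ofReal_le_ofReal hNβ
  -- conclusion
  rw [ge_iff_le]
  have hunion : {ω : Fin M → Fin n₁ → α × ℝ | v (p istar) - v (p (iHat ω)) < ε}
      ∪ {ω | ¬ (v (p istar) - v (p (iHat ω)) < ε)} = Set.univ := by
    ext ω
    simp only [Set.mem_union, Set.mem_setOf_eq, Set.mem_univ, iff_true, not_lt]
    exact lt_or_ge _ _
  have hone : (1:ENNReal) ≤ Pbig {ω | v (p istar) - v (p (iHat ω)) < ε}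
      + Pbig {ω | ¬ (v (p istar) - v (p (iHat ω)) < ε)} := by
    calc (1:ENNReal) = Pbig Set.univ := measure_univ.symm
      _ = Pbig ({ω | v (p istar) - v (p (iHat ω)) < ε}
          ∪ {ω | ¬ (v (p istar) - v (p (iHat ω)) < ε)}) := by rw [hunion]
      _ ≤ _ + _ := measure_union_le _ _
  have hkey : ENNReal.ofReal (1 - δ) + ENNReal.ofReal δ = 1 := by
    rw [← ENNReal.ofReal_add (by linarith) (by linarith)]
    norm_num
  have h2 : ENNReal.ofReal (1 - δ) + ENNReal.ofReal δ
      ≤ Pbig {ω | v (p istar) - v (p (iHat ω)) < ε} + ENNReal.ofReal δ := by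
    rw [hkey]
    exact le_trans hone (add_le_add_right hEc _)
  exact (ENNReal.add_le_add_iff_right ENNReal.ofReal_ne_top).mp h2
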